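/- Let r ≥ 1, b ≥ 1 be integers, α a type with decidable equality, h : α → ℕ, and f the SLASH hash into (ZMod r)^b. Then each non-shared item changes the hash distance by at most 1: for all finite sets S, T ⊆ α and every x ∉ S ∪ T, both RingDist(f(S ∪ {x}), f(T)) ≤ RingDist(f(S), f(T)) + 1 and RingDist(f(S), f(T)) ≤ RingDist(f(S ∪ {x}), f(T)) + 1. -/

import Mathlib

/-- One-dimensional ring distance on `ZMod r`. -/
def ringDist (r : ℕ) (a c : ZMod r) : ℕ := min (a - c).val (c - a).val

/-- `b`-dimensional ring distance on `(ZMod r)^b`. -/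
def RingDist (r b : ℕ) (X Y : Fin b → ZMod r) : ℕ := ∑ j, ringDist r (X j) (Y j)

/-- The SLASH hash of a finite set. -/
def slash (r b : ℕ) {α : Type*} [DecidableEq α] (h : α → ℕ) (S : Finset α) :
    Fin b → ZMod r :=
  fun j => ∑ x ∈ S.filter (fun x => h x % b = (j : ℕ)), (-1 : ZMod r) ^ (h x / b)

lemma ringDist_eq_natAbs {r : ℕ} [NeZero r] (a c : ZMod r) :
    ringDist r a c = (a - c).valMinAbs.natAbs := by
  rw [ZMod.valMinAbs_natAbs_eq_min, ringDist, show c - a = -(a - c) by ring]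
  by_cases hz : a - c = 0
  · simp [hz]
  · rw [ZMod.neg_val, if_neg hz]

lemma ringDist_tri {r : ℕ} [NeZero r] (a c e : ZMod r) :
    ringDist r (a + e) c ≤ ringDist r a c + e.valMinAbs.natAbs := by
  rw [ringDist_eq_natAbs, ringDist_eq_natAbs, show a + e - c = (a - c) + e by ring]
  exact (ZMod.natAbs_valMinAbs_add_le _ _).trans (Int.natAbs_add_le _ _)

lemma neg_one_pow_natAbs {r : ℕ} [NeZero r] (k : ℕ) :
    ((-1 : ZMod r) ^ k).valMinAbs.natAbs ≤ 1 := by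
  have h1 : ((1 : ZMod r)).valMinAbs.natAbs ≤ 1 := by
    rw [ZMod.valMinAbs_natAbs_eq_min]
    exact le_trans (min_le_left _ _)
      (by rw [ZMod.val_one_eq_one_mod]; exact Nat.mod_le 1 r)
  rcases Nat.even_or_odd k with hk | hk
  · rw [hk.neg_one_pow]; exact h1
  · rw [hk.neg_one_pow, show ((-1 : ZMod r)) = -(1 : ZMod r) by ring,
      ZMod.natAbs_valMinAbs_neg]; exact h1

lemma RingDist_add_le {r b : ℕ} [NeZero r] (B C E : Fin b → ZMod r) (j₀ : Fin b)
    (hE : ∀ j, j ≠ j₀ → E j = 0) (hE0 : (E j₀).valMinAbs.natAbs ≤ 1) :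
    RingDist r b (fun j => B j + E j) C ≤ RingDist r b B C + 1 := by
  unfold RingDist
  calc ∑ j, ringDist r (B j + E j) (C j)
      ≤ ∑ j, (ringDist r (B j) (C j) + (E j).valMinAbs.natAbs) :=
        Finset.sum_le_sum fun j _ => ringDist_tri _ _ _
    _ = ∑ j, ringDist r (B j) (C j) + ∑ j, (E j).valMinAbs.natAbs :=
        Finset.sum_add_distrib
    _ ≤ ∑ j, ringDist r (B j) (C j) + 1 := by
        refine Nat.add_le_add_left ?_ _
        rw [Fintype.sum_eq_single j₀ (fun j hj => by rw [hE j hj, ZMod.valMinAbs_zero, Int.natAbs_zero])]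
        exact hE0

theorem slash_dist_insert_nonshared (r b : ℕ) (hr : 1 ≤ r) (hb : 1 ≤ b)
    {α : Type*} [DecidableEq α] (h : α → ℕ) (S T : Finset α) (x : α)
    (hx : x ∉ S ∪ T) :
    RingDist r b (slash r b h (S ∪ {x})) (slash r b h T) ≤
        RingDist r b (slash r b h S) (slash r b h T) + 1 ∧
    RingDist r b (slash r b h S) (slash r b h T) ≤
        RingDist r b (slash r b h (S ∪ {x})) (slash r b h T) + 1 := by
  have : NeZero r := ⟨by omega⟩
  have hxS : x ∉ S := fun hxs => hx (Finset.mem_union_left _ hxs)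
  set E : Fin b → ZMod r :=
    fun j => if h x % b = (j : ℕ) then (-1 : ZMod r) ^ (h x / b) else 0 with hEdef
  have key : slash r b h (S ∪ {x}) = fun j => slash r b h S j + E j := by
    funext j
    rw [Finset.union_comm, ← Finset.insert_eq]
    simp only [slash, Finset.filter_insert, hEdef]
    split_ifs with hc
    · rw [Finset.sum_insert (by simp [hxS]), add_comm]
    · rw [add_zero]
  have j₀ : Fin b := ⟨h x % b, Nat.mod_lt _ (by omega)⟩
  have hEj : ∀ j, j ≠ (⟨h x % b, Nat.mod_lt _ (by omega)⟩ : Fin b) → E j = 0 := by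
    intro j hj
    simp only [hEdef]
    rw [if_neg]
    intro hc
    exact hj (Fin.ext hc.symm)
  have hEv : (E ⟨h x % b, Nat.mod_lt _ (by omega)⟩).valMinAbs.natAbs ≤ 1 := by
    simp only [hEdef, if_pos rfl]
    exact neg_one_pow_natAbs _
  constructor
  · rw [key]
    exact RingDist_add_le _ _ E _ hEj hEv
  · have key2 : slash r b h S = fun j => slash r b h (S ∪ {x}) j + (-E j) := by
      funext j
      rw [key]
      ring
    rw [key2]
    refine RingDist_add_le _ _ _ (⟨h x % b, Nat.mod_lt _ (by omega)⟩ : Fin b)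
      (fun j hj => by rw [hEj j hj, neg_zero]) ?_
    rw [ZMod.natAbs_valMinAbs_neg]
    exact hEv
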